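/- arXiv:2512.13344 — 3 statements merged into one kernel-verified Lean document; each statement's English description precedes it below -/
import Mathlib

section
/- Let T > 0, n, m ∈ ℕ, and let α : ℝ → ℝ be Lipschitz continuous, strictly increasing, with α(0) = 0. Let f : (ℝ^n × ℝ^m) → ℝ^n, g : (ℝ^n × ℝ) → ℝ^m, and let B : (ℝ^n × ℝ) → ℝ be continuously differentiable. Suppose that for all (y, s) ∈ ℝ^n × [0, T], the inner product of the spatial gradient ∂B/∂x(y, s) with f(y, g(y, s)), plus the time derivative ∂B/∂t(y, s), is at least -α(B(y, s)). Let x : ℝ → ℝ^n be differentiable on [0, T] with x'(t) = f(x(t), g(x(t), t)) for all t ∈ [0, T], and suppose B(x(0), 0) ≥ 0. Then B(x(t), t) ≥ 0 for all t ∈ [0, T]. -/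
open RealInnerProductSpace

/-- Theorem 1 of the paper in its general form: `α` is a Lipschitz, strictly
increasing extended class-K function with `α 0 = 0`, `B` is a continuously
differentiable time-varying barrier, and the barrier condition holds along the
closed-loop dynamics; then `B (x t, t) ≥ 0` on `[0, T]`. -/
theorem stmt_5 (T : ℝ) (hT : 0 < T) (n m : ℕ) (α : ℝ → ℝ) (K : NNReal)
    (hαLip : LipschitzWith K α) (hαmono : StrictMono α) (hα0 : α 0 = 0)
    (f : EuclideanSpace ℝ (Fin n) × EuclideanSpace ℝ (Fin m) → EuclideanSpace ℝ (Fin n))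
    (g : EuclideanSpace ℝ (Fin n) × ℝ → EuclideanSpace ℝ (Fin m))
    (B : EuclideanSpace ℝ (Fin n) × ℝ → ℝ) (hB : ContDiff ℝ 1 B)
    (hcbf : ∀ (y : EuclideanSpace ℝ (Fin n)), ∀ s ∈ Set.Icc (0 : ℝ) T,
      ⟪gradient (fun z => B (z, s)) y, f (y, g (y, s))⟫
        + deriv (fun τ => B (y, τ)) s ≥ -α (B (y, s)))
    (x : ℝ → EuclideanSpace ℝ (Fin n))
    (hx : ∀ t ∈ Set.Icc (0 : ℝ) T, HasDerivAt x (f (x t, g (x t, t))) t)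
    (hx0 : 0 ≤ B (x 0, 0)) :
    ∀ t ∈ Set.Icc (0 : ℝ) T, 0 ≤ B (x t, t) := by
  set h : ℝ → ℝ := fun t => B (x t, t) with hh
  -- Derivative of h at points of [0, T]
  have hBd : Differentiable ℝ B := hB.differentiable one_ne_zero
  -- decomposition of the full derivative into partials
  have key : ∀ (y : EuclideanSpace ℝ (Fin n)) (s : ℝ) (v : EuclideanSpace ℝ (Fin n)),
      fderiv ℝ B (y, s) (v, 1)
        = ⟪gradient (fun z => B (z, s)) y, v⟫ + deriv (fun τ => B (y, τ)) s := by
    intro y s v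
    have hL : HasFDerivAt B (fderiv ℝ B (y, s)) (y, s) := (hBd (y, s)).hasFDerivAt
    -- spatial partial
    have hsp : HasFDerivAt (fun z => B (z, s))
        ((fderiv ℝ B (y, s)).comp (ContinuousLinearMap.inl ℝ _ _)) y :=
      hL.comp y (hasFDerivAt_prodMk_left y s)
    have hgrad : ⟪gradient (fun z => B (z, s)) y, v⟫ = fderiv ℝ B (y, s) (v, 0) := by
      rw [gradient, InnerProductSpace.toDual_symm_apply, hsp.fderiv]
      rfl
    -- time partial
    have htm : HasDerivAt (fun τ => B (y, τ)) (fderiv ℝ B (y, s) (0, 1)) s :=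
      hL.comp_hasDerivAt s ((hasDerivAt_const s y).prodMk (hasDerivAt_id s))
    have : ((v, 1) : EuclideanSpace ℝ (Fin n) × ℝ) = (v, 0) + (0, 1) := by
      simp [Prod.ext_iff]
    rw [this, map_add, hgrad, htm.deriv]
  have hder : ∀ t ∈ Set.Icc (0 : ℝ) T,
      HasDerivAt h (fderiv ℝ B (x t, t) (f (x t, g (x t, t)), 1)) t := by
    intro t ht
    have hcurve : HasDerivAt (fun τ => (x τ, τ)) ((f (x t, g (x t, t)), 1) :
        EuclideanSpace ℝ (Fin n) × ℝ) t := by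
      have := (hx t ht).prodMk (hasDerivAt_id t)
      exact this
    have H := HasFDerivAt.comp_hasDerivAt (f := fun τ => (x τ, τ)) t
      ((hBd (x t, t)).hasFDerivAt) hcurve
    exact H
  have hbound : ∀ t ∈ Set.Icc (0 : ℝ) T,
      -α (h t) ≤ fderiv ℝ B (x t, t) (f (x t, g (x t, t)), 1) := by
    intro t ht
    rw [key]
    exact hcbf (x t) t ht
  have hcont : ContinuousOn h (Set.Icc 0 T) := fun t ht =>
    ((hder t ht).continuousAt).continuousWithinAt
  -- main argument
  intro t₁ ht₁
  by_contra hneg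
  push_neg at hneg
  set S : Set ℝ := Set.Icc 0 t₁ ∩ h ⁻¹' Set.Ici 0 with hS
  have hsub : Set.Icc (0 : ℝ) t₁ ⊆ Set.Icc 0 T :=
    Set.Icc_subset_Icc le_rfl ht₁.2
  have hScl : IsClosed S :=
    (hcont.mono hsub).preimage_isClosed_of_isClosed isClosed_Icc isClosed_Ici
  have hS0 : (0 : ℝ) ∈ S := ⟨⟨le_rfl, ht₁.1⟩, hx0⟩
  have hSne : S.Nonempty := ⟨0, hS0⟩
  have hSbdd : BddAbove S := ⟨t₁, fun u hu => hu.1.2⟩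
  have hcS : sSup S ∈ S := hScl.csSup_mem hSne hSbdd
  obtain ⟨c, hcdef⟩ : ∃ c, c = sSup S := ⟨_, rfl⟩
  rw [← hcdef] at hcS
  have hc0 : 0 ≤ c := hcS.1.1
  have hct : c ≤ t₁ := hcS.1.2
  have hchpos : 0 ≤ h c := hcS.2
  have hclt : c < t₁ := lt_of_le_of_ne hct (fun he => by
    rw [he] at hchpos
    exact absurd hchpos (not_le.mpr hneg))
  have hIoo : ∀ u ∈ Set.Ioo c t₁, h u < 0 := by
    intro u hu
    by_contra hcon
    push_neg at hcon
    have : u ∈ S := ⟨⟨hc0.trans hu.1.le, hu.2.le⟩, hcon⟩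
    exact absurd (hcdef ▸ le_csSup hSbdd this) (not_le.mpr hu.1)
  have hIccsub : Set.Icc c t₁ ⊆ Set.Icc 0 T :=
    Set.Icc_subset_Icc hc0 ht₁.2
  have hmono : MonotoneOn h (Set.Icc c t₁) := by
    apply monotoneOn_of_deriv_nonneg (convex_Icc c t₁) (hcont.mono hIccsub)
    · intro u hu
      rw [interior_Icc] at hu
      exact ((hder u (hIccsub (Set.Ioo_subset_Icc_self hu))).differentiableAt).differentiableWithinAt
    · intro u hu
      rw [interior_Icc] at hu
      have huT := hIccsub (Set.Ioo_subset_Icc_self hu)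
      rw [(hder u huT).deriv]
      have h1 : α (h u) ≤ 0 := by
        rw [← hα0]
        exact (hαmono.le_iff_le).mpr (hIoo u hu).le
      have := hbound u huT
      linarith
  have := hmono ⟨le_rfl, hclt.le⟩ ⟨hclt.le, le_rfl⟩ hclt.le
  exact absurd (hchpos.trans this) (not_le.mpr hneg)
end

section
/- Let T > 0, α > 0, n, m ∈ ℕ, and let I be a finite index set with, for each i ∈ I, a predicate function h_i : ℝ^n → ℝ and an activity set A : ℝ → Set I. Let f : (ℝ^n × ℝ^m) → ℝ^n, g : (ℝ^n × ℝ) → ℝ^m, and let B : (ℝ^n × ℝ) → ℝ be continuously differentiable such that for all (y, s) ∈ ℝ^n × [0, T], the inner product of ∂B/∂x(y, s) with f(y, g(y, s)), plus ∂B/∂t(y, s), is at least -α · B(y, s). Suppose that for every t ∈ [0, T], the set {y ∈ ℝ^n : B(y, t) ≥ 0} is contained in {y ∈ ℝ^n : h_i(y) ≥ 0 for all i ∈ A(t)}. Let x : ℝ → ℝ^n be differentiable on [0, T] with x'(t) = f(x(t), g(x(t), t)) for all t ∈ [0, T] and B(x(0), 0) ≥ 0. Then for every t ∈ [0, T] and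 every i ∈ A(t), h_i(x(t)) ≥ 0. -/
open RealInnerProductSpace

/-- Theorem 2 of the paper with linear class-K function: if the zero-superlevel
set of the barrier `B (·, t)` is contained in the time-varying STL safe set
`{y | h i y ≥ 0 for all active i}` for every `t ∈ [0, T]`, then the closed-loop
trajectory satisfies all active predicates at every time. -/
theorem stmt_6 (T α : ℝ) (hT : 0 < T) (hα : 0 < α) (n m : ℕ)
    (ι : Type*) [Fintype ι] (h : ι → EuclideanSpace ℝ (Fin n) → ℝ)
    (A : ℝ → Set ι)
    (f : EuclideanSpace ℝ (Fin n) × EuclideanSpace ℝ (Fin m) → EuclideanSpace ℝ (Fin n))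
    (g : EuclideanSpace ℝ (Fin n) × ℝ → EuclideanSpace ℝ (Fin m))
    (B : EuclideanSpace ℝ (Fin n) × ℝ → ℝ) (hB : ContDiff ℝ 1 B)
    (hcbf : ∀ (y : EuclideanSpace ℝ (Fin n)), ∀ s ∈ Set.Icc (0 : ℝ) T,
      ⟪gradient (fun z => B (z, s)) y, f (y, g (y, s))⟫
        + deriv (fun τ => B (y, τ)) s ≥ -α * B (y, s))
    (hsub : ∀ t ∈ Set.Icc (0 : ℝ) T,
      {y : EuclideanSpace ℝ (Fin n) | 0 ≤ B (y, t)} ⊆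
        {y : EuclideanSpace ℝ (Fin n) | ∀ i ∈ A t, 0 ≤ h i y})
    (x : ℝ → EuclideanSpace ℝ (Fin n))
    (hx : ∀ t ∈ Set.Icc (0 : ℝ) T, HasDerivAt x (f (x t, g (x t, t))) t)
    (hx0 : 0 ≤ B (x 0, 0)) :
    ∀ t ∈ Set.Icc (0 : ℝ) T, ∀ i ∈ A t, 0 ≤ h i (x t) := by
  intro t ht i hi
  apply hsub t ht _ i hi
  show 0 ≤ B (x t, t)
  have hBd : Differentiable ℝ B := hB.differentiable one_ne_zero
  set φ : ℝ → ℝ := fun s => B (x s, s) with hφdef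
  -- derivative of φ on [0, T]
  have hder : ∀ s ∈ Set.Icc (0 : ℝ) T, HasDerivAt φ
      (⟪gradient (fun z => B (z, s)) (x s), f (x s, g (x s, s))⟫
        + deriv (fun τ => B (x s, τ)) s) s := by
    intro s hs
    set y := x s
    set v := f (y, g (y, s))
    have hγ : HasDerivAt (fun u => (x u, u)) (v, (1 : ℝ)) s :=
      HasDerivAt.prodMk (hx s hs) (hasDerivAt_id s)
    have hBc : HasFDerivAt B (fderiv ℝ B (y, s)) (y, s) := (hBd _).hasFDerivAt
    have hcomp : HasDerivAt φ (fderiv ℝ B (y, s) (v, 1)) s :=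
      HasFDerivAt.comp_hasDerivAt (l := B) (f := fun u => (x u, u)) s hBc hγ
    convert hcomp using 1
    -- partial derivative in space
    have h1 : HasFDerivAt (fun z : EuclideanSpace ℝ (Fin n) => B (z, s))
        ((fderiv ℝ B (y, s)).comp
          (ContinuousLinearMap.inl ℝ (EuclideanSpace ℝ (Fin n)) ℝ)) y := by
      have : HasFDerivAt (fun z : EuclideanSpace ℝ (Fin n) => (z, s))
          (ContinuousLinearMap.inl ℝ (EuclideanSpace ℝ (Fin n)) ℝ) y :=
        HasFDerivAt.prodMk (hasFDerivAt_id y) (hasFDerivAt_const s y)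
      exact hBc.comp y this
    have hg1 : ⟪gradient (fun z => B (z, s)) y, v⟫ = fderiv ℝ B (y, s) (v, 0) := by
      have := h1.fderiv
      rw [gradient, this, InnerProductSpace.toDual_symm_apply]
      rfl
    -- partial derivative in time
    have h2 : HasDerivAt (fun τ => B (y, τ)) (fderiv ℝ B (y, s) (0, 1)) s := by
      have : HasDerivAt (fun τ : ℝ => (y, τ)) ((0 : EuclideanSpace ℝ (Fin n)), (1 : ℝ)) s :=
        HasDerivAt.prodMk (hasDerivAt_const s y) (hasDerivAt_id s)
      exact hBc.comp_hasDerivAt s this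
    rw [hg1, h2.deriv]
    have : (v, (1 : ℝ)) = (v, (0 : ℝ)) + ((0 : EuclideanSpace ℝ (Fin n)), (1 : ℝ)) := by
      simp
    rw [this, map_add]
  -- Grönwall via the exponential trick
  set ψ : ℝ → ℝ := fun s => Real.exp (α * s) * φ s with hψdef
  have hψder : ∀ s ∈ Set.Icc (0 : ℝ) T, HasDerivAt ψ
      (α * Real.exp (α * s) * φ s
        + Real.exp (α * s) * (⟪gradient (fun z => B (z, s)) (x s), f (x s, g (x s, s))⟫
            + deriv (fun τ => B (x s, τ)) s)) s := by
    intro s hs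
    have he : HasDerivAt (fun u : ℝ => Real.exp (α * u)) (α * Real.exp (α * s)) s := by
      have := ((hasDerivAt_id s).const_mul α).exp
      simpa [mul_comm] using this
    exact he.mul (hder s hs)
  have hmono : MonotoneOn ψ (Set.Icc 0 T) := by
    apply monotoneOn_of_deriv_nonneg (convex_Icc 0 T)
    · exact fun s hs => (hψder s hs).continuousAt.continuousWithinAt
    · intro s hs
      rw [interior_Icc] at hs
      exact ((hψder s (Set.mem_Icc_of_Ioo hs)).differentiableAt).differentiableWithinAt
    · intro s hs
      rw [interior_Icc] at hs
      rw [(hψder s (Set.mem_Icc_of_Ioo hs)).deriv]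
      have hc := hcbf (x s) s (Set.mem_Icc_of_Ioo hs)
      have he := Real.exp_pos (α * s)
      nlinarith [hc, he]
  have h0 : (0 : ℝ) ∈ Set.Icc (0 : ℝ) T := Set.left_mem_Icc.mpr hT.le
  have := hmono h0 ht ht.1
  have hψ0 : 0 ≤ ψ 0 := by simpa [hψdef, hφdef] using hx0
  have hψt : 0 ≤ ψ t := le_trans hψ0 this
  have he := Real.exp_pos (α * t)
  have : 0 ≤ φ t := nonneg_of_mul_nonneg_right hψt he
  simpa [hφdef] using this
end

section
/- Let n, m ∈ ℕ and α > 0. Let B : (ℝ^n × ℝ) → ℝ be Lipschitz with constant L_b, and let G_x : (ℝ^n × ℝ) → ℝ^n and G_t : (ℝ^n × ℝ) → ℝ (the spatial gradient and time derivative of B) each be Lipschitz with constant L_db and satisfy ‖(G_x(w), G_t(w))‖₂ ≤ M_b for all w. Let f : (ℝ^n × ℝ^m) → ℝ^n satisfy ‖f(x₁, u) − f(x₂, u)‖₂ ≤ L_x ‖x₁ − x₂‖₂, ‖f(x, u₁) − f(x, u₂)‖₂ ≤ L_u ‖u₁ − u₂‖₂, and ‖f(x, u)‖₂ ≤ M_f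 for all arguments, and let g : (ℝ^n × ℝ) → ℝ^m be Lipschitz with constant L_g. Then the function q₃ : ℝ^n × ℝ → ℝ defined by q₃(x, t) = −⟨G_x(x, t), f(x, g(x, t))⟩ − G_t(x, t) − α · B(x, t) is Lipschitz with constant L_db (M_f + 1) + M_b (L_x + L_u L_g) + α L_b. -/
open RealInnerProductSpace

/-- Euclidean norm of the increment on the product space `ℝ^n × ℝ`
(the Euclidean product norm of `p - q`). -/
noncomputable def prodDist2 {n : ℕ} (p q : EuclideanSpace ℝ (Fin n) × ℝ) : ℝ :=
  Real.sqrt (‖p.1 - q.1‖ ^ 2 + |p.2 - q.2| ^ 2)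

/-- Explicit Lipschitz constant `L₃ = L_db (M_f + 1) + M_b (L_x + L_u L_g) + α L_b`
of the barrier-derivative constraint
`q₃ (x, t) = -⟪∂B/∂x (x,t), f (x, g (x,t))⟫ - ∂B/∂t (x,t) - α B (x,t)`
from Theorem 3 of the paper, under Assumption 2. -/
theorem stmt_10 (n m : ℕ) (α : ℝ) (hα : 0 < α)
    (B : EuclideanSpace ℝ (Fin n) × ℝ → ℝ)
    (Gx : EuclideanSpace ℝ (Fin n) × ℝ → EuclideanSpace ℝ (Fin n))
    (Gt : EuclideanSpace ℝ (Fin n) × ℝ → ℝ)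
    (Lb Ldb Mb Lx Lu Mf Lg : ℝ)
    (hLb : 0 ≤ Lb) (hLdb : 0 ≤ Ldb) (hMb : 0 ≤ Mb)
    (hLx : 0 ≤ Lx) (hLu : 0 ≤ Lu) (hMf : 0 ≤ Mf) (hLg : 0 ≤ Lg)
    (hB : ∀ p q : EuclideanSpace ℝ (Fin n) × ℝ, |B p - B q| ≤ Lb * prodDist2 p q)
    (hGx : ∀ p q : EuclideanSpace ℝ (Fin n) × ℝ, ‖Gx p - Gx q‖ ≤ Ldb * prodDist2 p q)
    (hGt : ∀ p q : EuclideanSpace ℝ (Fin n) × ℝ, |Gt p - Gt q| ≤ Ldb * prodDist2 p q)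
    (hMbBound : ∀ w : EuclideanSpace ℝ (Fin n) × ℝ,
      Real.sqrt (‖Gx w‖ ^ 2 + |Gt w| ^ 2) ≤ Mb)
    (f : EuclideanSpace ℝ (Fin n) × EuclideanSpace ℝ (Fin m) → EuclideanSpace ℝ (Fin n))
    (hfx : ∀ (x₁ x₂ : EuclideanSpace ℝ (Fin n)) (u : EuclideanSpace ℝ (Fin m)),
      ‖f (x₁, u) - f (x₂, u)‖ ≤ Lx * ‖x₁ - x₂‖)
    (hfu : ∀ (x : EuclideanSpace ℝ (Fin n)) (u₁ u₂ : EuclideanSpace ℝ (Fin m)),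
      ‖f (x, u₁) - f (x, u₂)‖ ≤ Lu * ‖u₁ - u₂‖)
    (hfbd : ∀ (x : EuclideanSpace ℝ (Fin n)) (u : EuclideanSpace ℝ (Fin m)),
      ‖f (x, u)‖ ≤ Mf)
    (g : EuclideanSpace ℝ (Fin n) × ℝ → EuclideanSpace ℝ (Fin m))
    (hg : ∀ p q : EuclideanSpace ℝ (Fin n) × ℝ, ‖g p - g q‖ ≤ Lg * prodDist2 p q)
    (q₃ : EuclideanSpace ℝ (Fin n) × ℝ → ℝ)
    (hq₃ : ∀ w : EuclideanSpace ℝ (Fin n) × ℝ,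
      q₃ w = -⟪Gx w, f (w.1, g w)⟫ - Gt w - α * B w) :
    ∀ p q : EuclideanSpace ℝ (Fin n) × ℝ,
      |q₃ p - q₃ q| ≤ (Ldb * (Mf + 1) + Mb * (Lx + Lu * Lg) + α * Lb) * prodDist2 p q := by
  intro p q
  set d := prodDist2 p q with hd
  have hd0 : 0 ≤ d := Real.sqrt_nonneg _
  have hx : ‖p.1 - q.1‖ ≤ d := by
    rw [hd]
    unfold prodDist2
    exact (Real.le_sqrt (norm_nonneg _) (by positivity)).mpr (le_add_of_nonneg_right (by positivity))
  have hGxbd : ‖Gx q‖ ≤ Mb := by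
    refine le_trans ?_ (hMbBound q)
    exact (Real.le_sqrt (norm_nonneg _) (by positivity)).mpr (le_add_of_nonneg_right (by positivity))
  have hgpq : ‖g p - g q‖ ≤ Lg * d := hg p q
  have hf : ‖f (p.1, g p) - f (q.1, g q)‖ ≤ (Lx + Lu * Lg) * d := by
    have h1 : ‖f (p.1, g p) - f (q.1, g p)‖ ≤ Lx * ‖p.1 - q.1‖ := hfx p.1 q.1 (g p)
    have h2 : ‖f (q.1, g p) - f (q.1, g q)‖ ≤ Lu * ‖g p - g q‖ := hfu q.1 (g p) (g q)
    have h3 := norm_add_le (f (p.1, g p) - f (q.1, g p)) (f (q.1, g p) - f (q.1, g q))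
    have h4 : f (p.1, g p) - f (q.1, g p) + (f (q.1, g p) - f (q.1, g q))
        = f (p.1, g p) - f (q.1, g q) := by abel
    rw [h4] at h3
    nlinarith [mul_le_mul_of_nonneg_left hx hLx, mul_le_mul_of_nonneg_left hgpq hLu]
  have hip : ⟪Gx p, f (p.1, g p)⟫ - ⟪Gx q, f (q.1, g q)⟫
      = ⟪Gx p - Gx q, f (p.1, g p)⟫ + ⟪Gx q, f (p.1, g p) - f (q.1, g q)⟫ := by
    simp [inner_sub_left, inner_sub_right]
  have hipbd : |⟪Gx p, f (p.1, g p)⟫ - ⟪Gx q, f (q.1, g q)⟫|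
      ≤ Ldb * d * Mf + Mb * ((Lx + Lu * Lg) * d) := by
    rw [hip]
    refine le_trans (abs_add_le _ _) ?_
    have h1 : |⟪Gx p - Gx q, f (p.1, g p)⟫| ≤ Ldb * d * Mf := by
      refine le_trans (abs_real_inner_le_norm _ _) ?_
      exact mul_le_mul (hGx p q) (hfbd p.1 (g p)) (norm_nonneg _) (by positivity)
    have h2 : |⟪Gx q, f (p.1, g p) - f (q.1, g q)⟫| ≤ Mb * ((Lx + Lu * Lg) * d) := by
      refine le_trans (abs_real_inner_le_norm _ _) ?_
      exact mul_le_mul hGxbd hf (norm_nonneg _) hMb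
    linarith
  have hBbd := hB p q
  have hGtbd := hGt p q
  have hsplit : q₃ p - q₃ q
      = -(⟪Gx p, f (p.1, g p)⟫ - ⟪Gx q, f (q.1, g q)⟫) + -(Gt p - Gt q)
        + -(α * (B p - B q)) := by
    rw [hq₃ p, hq₃ q]; ring
  rw [hsplit]
  refine le_trans (abs_add_three _ _ _) ?_
  rw [abs_neg, abs_neg, abs_neg, abs_mul, abs_of_pos hα]
  have h3 : α * |B p - B q| ≤ α * (Lb * d) :=
    mul_le_mul_of_nonneg_left hBbd hα.le
  nlinarith
end
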